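/- Let β < 0. Then: (i) the map φ_β(ξ) = ξ³ - βξ is a strictly increasing bijection of ℝ onto ℝ; denote its inverse by k_β. (ii) For every τ ∈ ℝ, the purely imaginary number z = i·k_β(τ) is a root of z³ + βz + iτ = 0, and it is the unique root with real part equal to zero. (iii) For every τ ∈ ℝ the other two roots are simple, and exactly one of them has negative real part while the other has positive real part. -/

import Mathlib

open Filter

/-- For `β < 0`: the map `φ_β(ξ) = ξ³ - βξ` is a strictly increasing bijection
of `ℝ`, and for each `τ ∈ ℝ` the number `i·k_β(τ)` (with `k_β = φ_β⁻¹`) is the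
unique purely imaginary root of `z³ + βz + iτ = 0`; the other two roots are
simple, one with negative and one with positive real part. -/
theorem cubic_root_structure_epsilon_zero (β : ℝ) (hβ : β < 0) :
    StrictMono (fun ξ : ℝ => ξ^3 - β * ξ) ∧
    Function.Bijective (fun ξ : ℝ => ξ^3 - β * ξ) ∧
    ∀ τ : ℝ,
      (Complex.I * (Function.invFun (fun ξ : ℝ => ξ^3 - β * ξ) τ : ℝ))^3
          + (β : ℂ) * (Complex.I * (Function.invFun (fun ξ : ℝ => ξ^3 - β * ξ) τ : ℝ))
          + Complex.I * (τ : ℂ) = 0 ∧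
      (∀ z : ℂ, z^3 + (β : ℂ) * z + Complex.I * (τ : ℂ) = 0 → z.re = 0 →
        z = Complex.I * (Function.invFun (fun ξ : ℝ => ξ^3 - β * ξ) τ : ℝ)) ∧
      ∃ z₁ z₂ : ℂ, z₁.re < 0 ∧ 0 < z₂.re ∧
        ∀ z : ℂ, z^3 + (β : ℂ) * z + Complex.I * (τ : ℂ)
          = (z - Complex.I * (Function.invFun (fun ξ : ℝ => ξ^3 - β * ξ) τ : ℝ))
            * (z - z₁) * (z - z₂) := by
  set f : ℝ → ℝ := fun ξ => ξ^3 - β * ξ with hf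
  have hmono : StrictMono f := by
    intro a b hab
    simp only [hf]
    nlinarith [sq_nonneg (a + b), sq_nonneg (a - b), sq_nonneg a, sq_nonneg b,
      mul_pos (sub_pos.mpr hab) (neg_pos.mpr hβ)]
  have hcont : Continuous f := by fun_prop
  have htop : Tendsto f atTop atTop := by
    have h1 : Tendsto (fun x : ℝ => x^3) atTop atTop := tendsto_pow_atTop (by norm_num)
    have h2 : Tendsto (fun x : ℝ => -β * x) atTop atTop := by
      exact Tendsto.const_mul_atTop (by linarith) tendsto_id
    have := Filter.Tendsto.atTop_add_atTop h1 h2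
    convert this using 2 with x
    ring
  have hbot : Tendsto f atBot atBot := by
    have h1 := htop.comp tendsto_neg_atBot_atTop
    have h2 := tendsto_neg_atTop_atBot.comp h1
    have : f = Neg.neg ∘ f ∘ Neg.neg := by
      funext x; simp only [Function.comp, hf]; ring
    rw [this]; exact h2
  have hsurj : Function.Surjective f := hcont.surjective htop hbot
  have hbij : Function.Bijective f := ⟨hmono.injective, hsurj⟩
  refine ⟨hmono, hbij, fun τ => ?_⟩
  set k : ℝ := Function.invFun f τ with hkdef
  have hk : k^3 - β * k = τ := Function.rightInverse_invFun hsurj τ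
  have hk' : (k : ℂ)^3 - (β : ℂ) * k = τ := by exact_mod_cast congrArg (Complex.ofReal ·) hk
  set s : ℝ := Real.sqrt (3 * k^2 - 4 * β) with hsdef
  have hs0 : 0 < s := Real.sqrt_pos.mpr (by nlinarith [sq_nonneg k])
  have hs2 : s^2 = 3 * k^2 - 4 * β := Real.sq_sqrt (by nlinarith [sq_nonneg k])
  have hs2' : (s : ℂ)^2 = 3 * (k : ℂ)^2 - 4 * (β : ℂ) := by exact_mod_cast congrArg (Complex.ofReal ·) hs2
  set z₁ : ℂ := ⟨-s/2, -k/2⟩ with hz1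
  set z₂ : ℂ := ⟨s/2, -k/2⟩ with hz2
  have hz1e : z₁ = -(s:ℂ)/2 - (k:ℂ)/2 * Complex.I := by
    apply Complex.ext <;> simp [hz1] <;> ring
  have hz2e : z₂ = (s:ℂ)/2 - (k:ℂ)/2 * Complex.I := by
    apply Complex.ext <;> simp [hz2] <;> ring
  have key : ∀ z : ℂ, z^3 + (β : ℂ) * z + Complex.I * (τ : ℂ)
      = (z - Complex.I * (k : ℂ)) * (z - z₁) * (z - z₂) := by
    intro z
    rw [hz1e, hz2e]
    linear_combination ((z - Complex.I * (k:ℂ))/4) * hs2' - Complex.I * hk' + (3*z*(k:ℂ)^2/4 + Complex.I*(k:ℂ)^3/4) * Complex.I_sq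
  refine ⟨?_, ?_, z₁, z₂, by simp [hz1]; linarith, by simp [hz2]; linarith, key⟩
  · rw [key]; ring
  · intro z hz hre
    rw [key] at hz
    rcases mul_eq_zero.mp hz with h | h
    · rcases mul_eq_zero.mp h with h | h
      · exact sub_eq_zero.mp h
      · exfalso
        have : z = z₁ := sub_eq_zero.mp h
        rw [this] at hre
        simp [hz1] at hre
        linarith
    · exfalso
      have : z = z₂ := sub_eq_zero.mp h
      rw [this] at hre
      simp [hz2] at hre
      linarith
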